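/- Let f : A → B be a lattice homomorphism between distributive lattices admitting a left adjoint f⁻ : B → A. Then the following are equivalent: (1) for every a ∈ A and b ∈ B, f⁻(b ∧ f(a)) = f⁻(b) ∧ a (Frobenius reciprocity); (2) for every a ∈ A, the lax square formed by the projections p_a : A → ↓a, p_{f(a)} : B → ↓f(a) and the restrictions of f has the interpolation property. -/
import Mathlib

/-- For a bounded lattice homomorphism `f : A → B` between bounded
distributive lattices admitting a left adjoint `g = f⁻`, Frobenius reciprocity
`g (b ⊓ f a) = g b ⊓ a` holds for all `a, b` iff for every `a ∈ A` the lax square formed by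
the projections `p_a : A → ↓a`, `p_{f a} : B → ↓f a` and the restrictions of `f` has the
interpolation property: whenever `f a ⊓ b ≤ f c` with `c ≤ a`, there is `z ∈ A` with
`b ≤ f z` and `a ⊓ z ≤ c`. -/
theorem stmt_4 {A B : Type*} [DistribLattice A] [BoundedOrder A]
    [DistribLattice B] [BoundedOrder B]
    (f : BoundedLatticeHom A B) (g : B → A) (adj : GaloisConnection g ⇑f) :
    (∀ (a : A) (b : B), g (b ⊓ f a) = g b ⊓ a) ↔
      ∀ (a : A) (b : B) (c : A), c ≤ a → f a ⊓ b ≤ f c →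
        ∃ z : A, b ≤ f z ∧ a ⊓ z ≤ c := by
  constructor
  · intro frob a b c _ h
    refine ⟨g b, adj.le_u le_rfl, ?_⟩
    have : g (b ⊓ f a) ≤ c := adj.l_le (by rwa [inf_comm])
    rw [frob] at this
    rwa [inf_comm] at this
  · intro interp a b
    apply le_antisymm
    · exact le_inf (adj.monotone_l inf_le_left) (adj.l_le inf_le_right)
    · have hside : f a ⊓ b ≤ f (g (b ⊓ f a) ⊓ a) := by
        have hu : b ⊓ f a ≤ f (g (b ⊓ f a)) := adj.le_u le_rfl
        rw [map_inf]
        exact le_inf (le_trans (by rw [inf_comm]) hu) inf_le_left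
      obtain ⟨z, hbz, hz⟩ := interp a b (g (b ⊓ f a) ⊓ a) inf_le_right hside
      calc g b ⊓ a ≤ z ⊓ a := inf_le_inf (adj.l_le hbz) le_rfl
        _ = a ⊓ z := inf_comm ..
        _ ≤ g (b ⊓ f a) ⊓ a := hz
        _ ≤ g (b ⊓ f a) := inf_le_left
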